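/- For all integers n ≥ 1, |P(n) - p·α^n| < α^(-n/2), where α is the real root of x^3 - x - 1, and p = (1+α)/(-α^2 + 3α + 1). -/

import Mathlib

def padovan : ℕ → ℕ
  | 0 => 1
  | 1 => 1
  | 2 => 1
  | n + 3 => padovan (n + 1) + padovan n

theorem padovan_binet_error (α : ℝ) (hroot : α ^ 3 = α + 1) (hα : 1 < α)
    (p : ℝ) (hp : p = (1 + α) / (-α ^ 2 + 3 * α + 1)) :
    ∀ n : ℕ, 1 ≤ n →
      |(padovan n : ℝ) - p * α ^ n| < α ^ (-(n : ℝ) / 2) := by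
  have hα0 : (0:ℝ) < α := by linarith
  have hα2 : α < 2 := by nlinarith
  have h132 : (1.32:ℝ) < α := by nlinarith [sq_nonneg (α - 1.32), sq_nonneg (α + 1.32), sq_nonneg α]
  have h133 : α < 1.33 := by nlinarith [sq_nonneg (α - 1.33), sq_nonneg (α + 1.33), sq_nonneg α]
  have hd : (0:ℝ) < -α ^ 2 + 3 * α + 1 := by nlinarith
  set c : ℝ := 1 / α with hc
  have hc0 : (0:ℝ) < c := by positivity
  have hcl : (0.75:ℝ) < c := by rw [hc, lt_div_iff₀ hα0]; nlinarith
  have hcu : c < 0.76 := by rw [hc, div_lt_iff₀ hα0]; nlinarith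
  have hpl : (0.71:ℝ) < p := by rw [hp, lt_div_iff₀ hd]; nlinarith
  have hpu : p < 0.73 := by rw [hp, div_lt_iff₀ hd]; nlinarith
  have hpd : (0:ℝ) < c - α ^ 2 / 4 := by nlinarith
  set E : ℕ → ℝ := fun n => (padovan n : ℝ) - p * α ^ n with hE
  have e0 : E 0 = 1 - p := by simp [hE, padovan]
  have e1 : E 1 = 1 - p * α := by simp [hE, padovan]
  have e2 : E 2 = 1 - p * α ^ 2 := by simp [hE, padovan]
  have hkey : p * (2 * α + 3) = α ^ 2 + α + 1 := by
    rw [hp, div_mul_eq_mul_div, div_eq_iff hd.ne']; linear_combination (α - 2) * hroot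
  have hrec : ∀ n, E (n + 3) = E (n + 1) + E n := by
    intro n
    have hpv : (padovan (n + 3) : ℝ) = padovan (n + 1) + padovan n := by
      have : padovan (n + 3) = padovan (n + 1) + padovan n := rfl
      rw [this]; push_cast; ring
    simp only [hE]
    rw [hpv]
    have hpow : α ^ (n + 3) = α ^ (n + 1) + α ^ n := by
      have h : α ^ (n + 3) = α ^ n * α ^ 3 := by ring
      rw [h, hroot]; ring
    rw [hpow]; ring
  have hquad : ∀ n, E (n + 2) = -α * E (n + 1) - c * E n := by
    intro n
    induction n with
    | zero =>
      rw [e0, e1, e2, hc]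
      field_simp
      linear_combination (2 * p * α - α + 1 - p + (1 - 2*p)*α - (1+p)) * hroot + (-1 : ℝ) * hkey
    | succ m ih =>
      have h1 : α * c = 1 := by rw [hc]; field_simp
      have h2 : α ^ 2 - c = 1 := by
        rw [hc]; field_simp; linear_combination hroot
      have h3 := hrec m
      have : E (m + 3) = -α * E (m + 2) - c * E (m + 1) := by
        rw [h3, ih]
        linear_combination (-(E (m + 1))) * h2 + (-(E m)) * h1
      exact this
  set Q : ℕ → ℝ := fun n => E (n + 1) ^ 2 + α * E (n + 1) * E n + c * E n ^ 2 with hQdef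
  have hQstep : ∀ n, Q (n + 1) = c * Q n := by
    intro n
    simp only [hQdef]
    rw [hquad n]; ring
  have hQ : ∀ n, Q n = c ^ n * Q 0 := by
    intro n
    induction n with
    | zero => simp
    | succ m ih => rw [hQstep m, ih]; ring
  have hposdef : ∀ n, (c - α ^ 2 / 4) * E n ^ 2 ≤ Q n := by
    intro n
    have h := sq_nonneg (E (n + 1) + α / 2 * E n)
    simp only [hQdef]
    nlinarith [h]
  have hQ0lt : Q 0 < c - α ^ 2 / 4 := by
    simp only [hQdef]
    rw [e0, e1]
    nlinarith [sq_nonneg (1 - p * α), sq_nonneg (1 - p), mul_pos hα0 hα0]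
  intro n _
  have hcpos : (0:ℝ) < c ^ n := by positivity
  have hEsq : E n ^ 2 < c ^ n := by
    have h4 : (c - α ^ 2 / 4) * E n ^ 2 < (c - α ^ 2 / 4) * c ^ n := by
      calc (c - α ^ 2 / 4) * E n ^ 2 ≤ Q n := hposdef n
        _ = c ^ n * Q 0 := hQ n
        _ < c ^ n * (c - α ^ 2 / 4) := by exact mul_lt_mul_of_pos_left hQ0lt hcpos
        _ = (c - α ^ 2 / 4) * c ^ n := by ring
    exact lt_of_mul_lt_mul_left h4 hpd.le
  have hy0 : (0:ℝ) < α ^ (-(n : ℝ) / 2) := Real.rpow_pos_of_pos hα0 _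
  have hysq : (α ^ (-(n : ℝ) / 2)) ^ 2 = c ^ n := by
    rw [← Real.rpow_natCast (α ^ (-(n : ℝ) / 2)) 2, ← Real.rpow_mul hα0.le]
    have h5 : (-(n : ℝ) / 2) * (2 : ℕ) = -(n : ℝ) := by push_cast; ring
    rw [h5, Real.rpow_neg hα0.le, Real.rpow_natCast, hc]
    rw [one_div, inv_pow]
  have habs : |E n| ^ 2 < (α ^ (-(n : ℝ) / 2)) ^ 2 := by
    rw [sq_abs, hysq]; exact hEsq
  have := lt_of_pow_lt_pow_left₀ 2 hy0.le habs
  simpa [hE] using this
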